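/- Let 4 ≤ p < q and n = p + q. Then S_i(D_{p,q}^{0,1}) = S_i(B_{p,q}^{0,1}) for i = 0, 1, 2, 3 and S_4(B_{p,q}^{0,1}) − S_4(D_{p,q}^{0,1}) = 4(q − p) > 0; in particular D_{p,q}^{0,1} ≺_s B_{p,q}^{0,1}. -/
import Mathlib


open SimpleGraph

open scoped Classical in
/-- The adjacency matrix of a simple graph, with real entries. -/
noncomputable def adjMat {V : Type*} [Fintype V] (G : SimpleGraph V) : Matrix V V ℝ :=
  Matrix.of fun a b => if G.Adj a b then 1 else 0

/-- The `k`-th spectral moment `S_k(G) = tr(A(G)^k)`. -/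
noncomputable def spectralMoment {V : Type*} [Fintype V] [DecidableEq V]
    (G : SimpleGraph V) (k : ℕ) : ℝ :=
  Matrix.trace (adjMat G ^ k)

/-- `SLt G₁ G₂` means `G₁ ≺_s G₂`: for some `k` with `1 ≤ k ≤ n - 1`,
`S_i(G₁) = S_i(G₂)` for all `i < k` and `S_k(G₁) < S_k(G₂)`. -/
def SLt {V : Type*} [Fintype V] [DecidableEq V] (G₁ G₂ : SimpleGraph V) : Prop :=
  ∃ k : ℕ, 1 ≤ k ∧ k ≤ Fintype.card V - 1 ∧
    (∀ i < k, spectralMoment G₁ i = spectralMoment G₂ i) ∧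
    spectralMoment G₁ k < spectralMoment G₂ k

/-- The tree `B_{p,q}^{k,l}` on `p + q` vertices: vertex `0 = u` is adjacent to `1 = v`
and to the `q - 1` vertices `2, …, q`; the distinguished neighbor `2` of `u` carries the
`k` pendant leaves `q+1, …, q+k`; the `l` neighbors `3, …, l+2` of `u` carry one pendant
leaf each (`q+k+j` is attached to `j+2` for `1 ≤ j ≤ l`); and `v` carries the
`p - k - l - 1` pendant leaves `q+k+l+1, …, p+q-1`. -/
def BTree (p q k l : ℕ) : SimpleGraph (Fin (p + q)) :=
  SimpleGraph.fromRel (fun a b =>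
    (a.val = 0 ∧ b.val = 1) ∨
    (a.val = 0 ∧ 2 ≤ b.val ∧ b.val ≤ q) ∨
    (a.val = 2 ∧ q + 1 ≤ b.val ∧ b.val ≤ q + k) ∨
    (q + k + 1 ≤ b.val ∧ b.val ≤ q + k + l ∧ a.val = b.val - (q + k) + 2) ∨
    (a.val = 1 ∧ q + k + l + 1 ≤ b.val))

/-- The tree `D_{p,q}^{k,l}` on `p + q` vertices: vertex `1 = v` is adjacent to `0 = u`
and to the `p - 1` vertices `2, …, p`; the distinguished neighbor `2` of `v` carries the
`k` pendant leaves `p+1, …, p+k`; the `l` neighbors `3, …, l+2` of `v` carry one pendant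
leaf each; and `u` carries the `q - k - l - 1` pendant leaves `p+k+l+1, …, p+q-1`. -/
def DTree (p q k l : ℕ) : SimpleGraph (Fin (p + q)) :=
  SimpleGraph.fromRel (fun a b =>
    (a.val = 0 ∧ b.val = 1) ∨
    (a.val = 1 ∧ 2 ≤ b.val ∧ b.val ≤ p) ∨
    (a.val = 2 ∧ p + 1 ≤ b.val ∧ b.val ≤ p + k) ∨
    (p + k + 1 ≤ b.val ∧ b.val ≤ p + k + l ∧ a.val = b.val - (p + k) + 2) ∨
    (a.val = 0 ∧ p + k + l + 1 ≤ b.val))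

/-- `T ∈ 𝒯_{p+q}^{p,q}`: `T` is a tree on `p + q` vertices with a `(p,q)`-bipartition. -/
def TreeBip (p q : ℕ) (G : SimpleGraph (Fin (p + q))) : Prop :=
  G.IsTree ∧ ∃ A : Finset (Fin (p + q)), A.card = p ∧
    ∀ ⦃x y : Fin (p + q)⦄, G.Adj x y → (x ∈ A ↔ y ∉ A)


/- ### Auxiliary machinery -/

section aux

open Matrix
open scoped Classical

section vec6
variable {α : Type*} (a b c d e f : α)
lemma vec6_0 : ![a,b,c,d,e,f] 0 = a := rfl
lemma vec6_1 : ![a,b,c,d,e,f] 1 = b := rfl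
lemma vec6_2 : ![a,b,c,d,e,f] 2 = c := rfl
lemma vec6_3 : ![a,b,c,d,e,f] 3 = d := rfl
lemma vec6_4 : ![a,b,c,d,e,f] 4 = e := rfl
lemma vec6_5 : ![a,b,c,d,e,f] 5 = f := rfl
end vec6

/-- The common 6-class quotient adjacency pattern of `B_{p,q}^{0,1}` and `D_{p,q}^{0,1}`. -/
noncomputable def M6 : Matrix (Fin 6) (Fin 6) ℝ :=
  Matrix.of fun i j =>
    if (i = 0 ∧ j = 1) ∨ (i = 1 ∧ j = 0) ∨ (i = 0 ∧ j = 2) ∨ (i = 2 ∧ j = 0) ∨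
       (i = 0 ∧ j = 4) ∨ (i = 4 ∧ j = 0) ∨ (i = 1 ∧ j = 5) ∨ (i = 5 ∧ j = 1) ∨
       (i = 2 ∧ j = 3) ∨ (i = 3 ∧ j = 2) then 1 else 0

noncomputable def ind {n m : ℕ} (c : Fin n → Fin m) : Matrix (Fin n) (Fin m) ℝ :=
  Matrix.of fun a j => if c a = j then 1 else 0

noncomputable def Dm {n m : ℕ} (c : Fin n → Fin m) : Matrix (Fin m) (Fin m) ℝ :=
  Matrix.diagonal fun j => ((Finset.univ.filter fun a => c a = j).card : ℝ)

lemma ind_spec {n m : ℕ} (c : Fin n → Fin m) (M : Matrix (Fin m) (Fin m) ℝ) :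
    (Matrix.of fun a b => M (c a) (c b)) = ind c * M * (ind c)ᵀ := by
  ext a b
  simp [ind, Matrix.mul_apply, Matrix.transpose_apply, ite_mul, mul_ite,
    Finset.sum_ite_eq, Finset.sum_ite_eq']

lemma indT_mul_ind {n m : ℕ} (c : Fin n → Fin m) : (ind c)ᵀ * ind c = Dm c := by
  ext j j'
  simp only [Matrix.mul_apply, Matrix.transpose_apply, ind, Dm, Matrix.diagonal,
    Matrix.of_apply]
  have key : ∀ a : Fin n, (if c a = j then (1:ℝ) else 0) * (if c a = j' then 1 else 0)
      = if c a = j ∧ c a = j' then 1 else 0 := by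
    intro a; by_cases h1 : c a = j <;> by_cases h2 : c a = j' <;> simp [h1, h2]
  rw [Finset.sum_congr rfl fun a _ => key a]
  rcases eq_or_ne j j' with rfl | h
  · simp [Finset.sum_boole]
  · simp only [if_neg h]
    rw [Finset.sum_eq_zero]
    intro a _
    split_ifs with h1
    · exact absurd (h1.1.symm.trans h1.2) h
    · rfl

lemma pow_blowup {n m : ℕ} (c : Fin n → Fin m) (M : Matrix (Fin m) (Fin m) ℝ) (k : ℕ) :
    (ind c * M * (ind c)ᵀ) ^ (k+1) = ind c * (M * Dm c) ^ k * M * (ind c)ᵀ := by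
  induction k with
  | zero => simp
  | succ k ih =>
      rw [pow_succ, ih, ← indT_mul_ind, pow_succ]
      simp only [Matrix.mul_assoc]

lemma trace_blowup {n m : ℕ} (c : Fin n → Fin m) (M : Matrix (Fin m) (Fin m) ℝ) (k : ℕ) :
    ((Matrix.of fun a b => M (c a) (c b)) ^ (k+1)).trace = ((M * Dm c)^(k+1)).trace := by
  rw [ind_spec, pow_blowup, Matrix.trace_mul_comm, pow_succ]
  rw [show (ind c)ᵀ * (ind c * (M * Dm c) ^ k * M) = ((ind c)ᵀ * ind c) * ((M * Dm c) ^ k * M)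
    from by simp only [Matrix.mul_assoc], indT_mul_ind, Matrix.trace_mul_comm]
  simp only [Matrix.mul_assoc]

noncomputable def Nm (x y : ℝ) : Matrix (Fin 6) (Fin 6) ℝ :=
  M6 * Matrix.diagonal ![1,1,1,1,x,y]

lemma Nm_apply (x y : ℝ) (i j : Fin 6) :
    Nm x y i j = M6 i j * ![1,1,1,1,x,y] j := Matrix.mul_diagonal ..

set_option maxHeartbeats 2000000 in
lemma tr_N1 (x y : ℝ) : (Nm x y ^ 1).trace = 0 := by
  rw [pow_one]
  simp only [Matrix.trace, Matrix.diag, Fin.sum_univ_six, Nm_apply,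
    M6, Matrix.of_apply, vec6_0, vec6_1, vec6_2, vec6_3, vec6_4, vec6_5]
  simp

set_option maxHeartbeats 2000000 in
lemma tr_N2 (x y : ℝ) : (Nm x y ^ 2).trace = 2*x + 2*y + 6 := by
  rw [pow_two]
  simp only [Matrix.trace, Matrix.diag, Matrix.mul_apply, Fin.sum_univ_six, Nm_apply,
    M6, Matrix.of_apply, vec6_0, vec6_1, vec6_2, vec6_3, vec6_4, vec6_5]
  simp
  ring

set_option maxHeartbeats 2000000 in
lemma tr_N3 (x y : ℝ) : (Nm x y ^ 3).trace = 0 := by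
  rw [show (3:ℕ) = 2+1 from rfl, pow_add, pow_two, pow_one]
  simp only [Matrix.trace, Matrix.diag, Matrix.mul_apply, Fin.sum_univ_six, Nm_apply,
    M6, Matrix.of_apply, vec6_0, vec6_1, vec6_2, vec6_3, vec6_4, vec6_5]
  simp
  try ring

set_option maxHeartbeats 4000000 in
lemma tr_N4 (x y : ℝ) : (Nm x y ^ 4).trace = 2*x^2 + 8*x + 2*y^2 + 4*y + 14 := by
  rw [show (4:ℕ) = 2+2 from rfl, pow_add, pow_two]
  simp only [Matrix.trace, Matrix.diag, Matrix.mul_apply, Fin.sum_univ_six, Nm_apply,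
    M6, Matrix.of_apply, vec6_0, vec6_1, vec6_2, vec6_3, vec6_4, vec6_5]
  simp
  try ring

/-- The classification of the vertices of `B_{p,q}^{0,1}` into the six classes. -/
def cB (q : ℕ) {n : ℕ} (a : Fin n) : Fin 6 :=
  if a.val = 0 then 0 else if a.val = 1 then 1 else if a.val = 3 then 2
  else if a.val = q+1 then 3 else if a.val ≤ q then 4 else 5

/-- The classification of the vertices of `D_{p,q}^{0,1}` into the six classes. -/
def cD (p : ℕ) {n : ℕ} (a : Fin n) : Fin 6 :=
  if a.val = 1 then 0 else if a.val = 0 then 1 else if a.val = 3 then 2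
  else if a.val = p+1 then 3 else if a.val ≤ p then 4 else 5

set_option maxHeartbeats 2000000 in
lemma adjB (p q : ℕ) (hp : 4 ≤ p) (hpq : p < q) :
    adjMat (BTree p q 0 1) = Matrix.of fun a b => M6 (cB q a) (cB q b) := by
  ext a b
  have ha := a.isLt
  have hb := b.isLt
  have hab : (a = b) ↔ (a.val = b.val) := Fin.ext_iff
  simp only [adjMat, Matrix.of_apply, M6, BTree, SimpleGraph.fromRel_adj]
  refine if_congr ?_ rfl rfl
  unfold cB
  split_ifs <;> simp_all <;> omega

set_option maxHeartbeats 2000000 in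
lemma adjD (p q : ℕ) (hp : 4 ≤ p) (hpq : p < q) :
    adjMat (DTree p q 0 1) = Matrix.of fun a b => M6 (cD p a) (cD p b) := by
  ext a b
  have ha := a.isLt
  have hb := b.isLt
  have hab : (a = b) ↔ (a.val = b.val) := Fin.ext_iff
  simp only [adjMat, Matrix.of_apply, M6, DTree, SimpleGraph.fromRel_adj]
  refine if_congr ?_ rfl rfl
  unfold cD
  split_ifs <;> simp_all <;> omega

lemma card_class {n : ℕ} (c : Fin n → Fin 6) (j : Fin 6) (s : Finset ℕ)
    (h : ∀ a : Fin n, c a = j ↔ a.val ∈ s) (hs : ∀ x ∈ s, x < n) :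
    (Finset.univ.filter fun a => c a = j).card = s.card := by
  rw [← Finset.card_image_of_injective _ Fin.val_injective]
  congr 1
  ext x
  simp only [Finset.mem_image, Finset.mem_filter, Finset.mem_univ, true_and]
  constructor
  · rintro ⟨a, hja, rfl⟩; exact (h a).1 hja
  · intro hx; exact ⟨⟨x, hs x hx⟩, (h _).2 hx, rfl⟩

lemma Dm_cB (p q : ℕ) (hp : 4 ≤ p) (hpq : p < q) :
    Dm (fun a : Fin (p+q) => cB q a) = Matrix.diagonal ![1,1,1,1,(q:ℝ)-2,(p:ℝ)-2] := by
  have hfun : (fun j : Fin 6 =>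
      ((Finset.univ.filter fun a : Fin (p+q) => cB q a = j).card : ℝ))
      = ![1,1,1,1,(q:ℝ)-2,(p:ℝ)-2] := by
    funext j
    fin_cases j
    · show (((Finset.univ.filter fun a : Fin (p+q) => cB q a = 0).card : ℕ) : ℝ) = (1:ℝ)
      rw [card_class (fun a : Fin (p+q) => cB q a) 0 {0}
        (fun a => by simp only [cB]; split_ifs <;> simp <;> omega)
        (fun x hx => by simp at hx; omega)]
      norm_num
    · show (((Finset.univ.filter fun a : Fin (p+q) => cB q a = 1).card : ℕ) : ℝ) = (1:ℝ)
      rw [card_class (fun a : Fin (p+q) => cB q a) 1 {1}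
        (fun a => by simp only [cB]; split_ifs <;> simp <;> omega)
        (fun x hx => by simp at hx; omega)]
      norm_num
    · show (((Finset.univ.filter fun a : Fin (p+q) => cB q a = 2).card : ℕ) : ℝ) = (1:ℝ)
      rw [card_class (fun a : Fin (p+q) => cB q a) 2 {3}
        (fun a => by simp only [cB]; split_ifs <;> simp <;> omega)
        (fun x hx => by simp at hx; omega)]
      norm_num
    · show (((Finset.univ.filter fun a : Fin (p+q) => cB q a = 3).card : ℕ) : ℝ) = (1:ℝ)
      rw [card_class (fun a : Fin (p+q) => cB q a) 3 {q+1}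
        (fun a => by simp only [cB]; split_ifs <;> simp <;> omega)
        (fun x hx => by simp at hx; omega)]
      norm_num
    · show (((Finset.univ.filter fun a : Fin (p+q) => cB q a = 4).card : ℕ) : ℝ) = (q:ℝ)-2
      rw [card_class (fun a : Fin (p+q) => cB q a) 4 ((Finset.Icc 2 q).erase 3)
        (fun a => by
          simp only [cB]
          split_ifs <;> simp [Finset.mem_erase, Finset.mem_Icc] <;> omega)
        (fun x hx => by simp [Finset.mem_erase, Finset.mem_Icc] at hx; omega)]
      rw [Finset.card_erase_of_mem (by simp [Finset.mem_Icc]; omega), Nat.card_Icc]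
      rw [show q + 1 - 2 - 1 = q - 2 from by omega, Nat.cast_sub (by omega : (2:ℕ) ≤ q)]
      push_cast
      ring
    · show (((Finset.univ.filter fun a : Fin (p+q) => cB q a = 5).card : ℕ) : ℝ) = (p:ℝ)-2
      rw [card_class (fun a : Fin (p+q) => cB q a) 5 (Finset.Icc (q+2) (p+q-1))
        (fun a => by
          have := a.isLt
          simp only [cB]
          split_ifs <;> simp [Finset.mem_Icc] <;> omega)
        (fun x hx => by simp [Finset.mem_Icc] at hx; omega)]
      rw [Nat.card_Icc]
      rw [show p + q - 1 + 1 - (q + 2) = p - 2 from by omega,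
        Nat.cast_sub (by omega : (2:ℕ) ≤ p)]
      push_cast
      ring
  unfold Dm
  rw [hfun]

lemma Dm_cD (p q : ℕ) (hp : 4 ≤ p) (hpq : p < q) :
    Dm (fun a : Fin (p+q) => cD p a) = Matrix.diagonal ![1,1,1,1,(p:ℝ)-2,(q:ℝ)-2] := by
  have hfun : (fun j : Fin 6 =>
      ((Finset.univ.filter fun a : Fin (p+q) => cD p a = j).card : ℝ))
      = ![1,1,1,1,(p:ℝ)-2,(q:ℝ)-2] := by
    funext j
    fin_cases j
    · show (((Finset.univ.filter fun a : Fin (p+q) => cD p a = 0).card : ℕ) : ℝ) = (1:ℝ)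
      rw [card_class (fun a : Fin (p+q) => cD p a) 0 {1}
        (fun a => by simp only [cD]; split_ifs <;> simp <;> omega)
        (fun x hx => by simp at hx; omega)]
      norm_num
    · show (((Finset.univ.filter fun a : Fin (p+q) => cD p a = 1).card : ℕ) : ℝ) = (1:ℝ)
      rw [card_class (fun a : Fin (p+q) => cD p a) 1 {0}
        (fun a => by simp only [cD]; split_ifs <;> simp <;> omega)
        (fun x hx => by simp at hx; omega)]
      norm_num
    · show (((Finset.univ.filter fun a : Fin (p+q) => cD p a = 2).card : ℕ) : ℝ) = (1:ℝ)
      rw [card_class (fun a : Fin (p+q) => cD p a) 2 {3}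
        (fun a => by simp only [cD]; split_ifs <;> simp <;> omega)
        (fun x hx => by simp at hx; omega)]
      norm_num
    · show (((Finset.univ.filter fun a : Fin (p+q) => cD p a = 3).card : ℕ) : ℝ) = (1:ℝ)
      rw [card_class (fun a : Fin (p+q) => cD p a) 3 {p+1}
        (fun a => by simp only [cD]; split_ifs <;> simp <;> omega)
        (fun x hx => by simp at hx; omega)]
      norm_num
    · show (((Finset.univ.filter fun a : Fin (p+q) => cD p a = 4).card : ℕ) : ℝ) = (p:ℝ)-2
      rw [card_class (fun a : Fin (p+q) => cD p a) 4 ((Finset.Icc 2 p).erase 3)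
        (fun a => by
          simp only [cD]
          split_ifs <;> simp [Finset.mem_erase, Finset.mem_Icc] <;> omega)
        (fun x hx => by simp [Finset.mem_erase, Finset.mem_Icc] at hx; omega)]
      rw [Finset.card_erase_of_mem (by simp [Finset.mem_Icc]; omega), Nat.card_Icc]
      rw [show p + 1 - 2 - 1 = p - 2 from by omega, Nat.cast_sub (by omega : (2:ℕ) ≤ p)]
      push_cast
      ring
    · show (((Finset.univ.filter fun a : Fin (p+q) => cD p a = 5).card : ℕ) : ℝ) = (q:ℝ)-2
      rw [card_class (fun a : Fin (p+q) => cD p a) 5 (Finset.Icc (p+2) (p+q-1))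
        (fun a => by
          have := a.isLt
          simp only [cD]
          split_ifs <;> simp [Finset.mem_Icc] <;> omega)
        (fun x hx => by simp [Finset.mem_Icc] at hx; omega)]
      rw [Nat.card_Icc]
      rw [show p + q - 1 + 1 - (p + 2) = q - 2 from by omega,
        Nat.cast_sub (by omega : (2:ℕ) ≤ q)]
      push_cast
      ring
  unfold Dm
  rw [hfun]

lemma smB (p q : ℕ) (hp : 4 ≤ p) (hpq : p < q) (k : ℕ) :
    spectralMoment (BTree p q 0 1) (k+1) = (Nm ((q:ℝ)-2) ((p:ℝ)-2) ^ (k+1)).trace := by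
  rw [spectralMoment, adjB p q hp hpq, trace_blowup (fun a => cB q a) M6 k,
    Dm_cB p q hp hpq]
  rfl

lemma smD (p q : ℕ) (hp : 4 ≤ p) (hpq : p < q) (k : ℕ) :
    spectralMoment (DTree p q 0 1) (k+1) = (Nm ((p:ℝ)-2) ((q:ℝ)-2) ^ (k+1)).trace := by
  rw [spectralMoment, adjD p q hp hpq, trace_blowup (fun a => cD p a) M6 k,
    Dm_cD p q hp hpq]
  rfl

end aux

/-- For `4 ≤ p < q` and `n = p + q`:
`S_i(D_{p,q}^{0,1}) = S_i(B_{p,q}^{0,1})` for `i = 0,1,2,3`, and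
`S_4(B_{p,q}^{0,1}) - S_4(D_{p,q}^{0,1}) = 4(q - p) > 0`; in particular
`D_{p,q}^{0,1} ≺_s B_{p,q}^{0,1}`. -/
theorem stmt_15 (p q : ℕ) (hp : 4 ≤ p) (hpq : p < q) :
    (∀ i < 4, spectralMoment (DTree p q 0 1) i = spectralMoment (BTree p q 0 1) i) ∧
    spectralMoment (BTree p q 0 1) 4 - spectralMoment (DTree p q 0 1) 4
      = 4 * ((q : ℝ) - (p : ℝ)) ∧
    0 < spectralMoment (BTree p q 0 1) 4 - spectralMoment (DTree p q 0 1) 4 ∧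
    SLt (DTree p q 0 1) (BTree p q 0 1) := by
  have hq2 : (p:ℝ) < (q:ℝ) := by exact_mod_cast hpq
  have heq : ∀ i < 4, spectralMoment (DTree p q 0 1) i = spectralMoment (BTree p q 0 1) i := by
    intro i hi
    interval_cases i
    · simp [spectralMoment, Matrix.trace_one]
    · rw [show (1:ℕ) = 0+1 from rfl, smB p q hp hpq, smD p q hp hpq, tr_N1, tr_N1]
    · rw [show (2:ℕ) = 1+1 from rfl, smB p q hp hpq, smD p q hp hpq, tr_N2, tr_N2]
      ring
    · rw [show (3:ℕ) = 2+1 from rfl, smB p q hp hpq, smD p q hp hpq, tr_N3, tr_N3]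
  have h4 : spectralMoment (BTree p q 0 1) 4 - spectralMoment (DTree p q 0 1) 4
      = 4 * ((q : ℝ) - (p : ℝ)) := by
    rw [show (4:ℕ) = 3+1 from rfl, smB p q hp hpq, smD p q hp hpq, tr_N4, tr_N4]
    ring
  have hpos : 0 < spectralMoment (BTree p q 0 1) 4 - spectralMoment (DTree p q 0 1) 4 := by
    rw [h4]; linarith
  refine ⟨heq, h4, hpos, 4, by norm_num, ?_, heq, by linarith⟩
  simp only [Fintype.card_fin]
  omega
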